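/- The property of having uniformly bounded growth rate is a quasi-isometry invariant: if f : X → Y is a quasi-isometric map of metric spaces and Y is an UBG-space, then X is an UBG-space; consequently, if there is a quasi-isometric map f : X → Y whose image is cobounded in Y (i.e. there is λ ≥ 0 such that every point of Y lies within distance λ of f(X)), then X is an UBG-space if and only if Y is an UBG-space. -/
import Mathlib


open Metric Set ENNReal

/-- A subset `A` of a metric space is `(N,R)`-bounded: for every `ρ ∈ (0,1)` and every
`r ≥ R ρ`, every ball of radius `r` in `A` (with the induced metric) contains at most
`N ρ` points that are pairwise at distance `≥ ρ·r`. -/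
def SubsetNRBounded {X : Type*} [MetricSpace X] (A : Set X) (N : ℝ → ℕ) (R : ℝ → ℝ) : Prop :=
  ∀ ρ : ℝ, 0 < ρ → ρ < 1 → ∀ r : ℝ, R ρ ≤ r → ∀ a ∈ A, ∀ S : Finset X,
    (S : Set X) ⊆ A ∩ Metric.closedBall a r →
    ((S : Set X).Pairwise fun p q => ρ * r ≤ dist p q) → S.card ≤ N ρ

/-- A metric space is `(N,R)`-bounded. -/
def IsNRBounded (X : Type*) [MetricSpace X] (N : ℝ → ℕ) (R : ℝ → ℝ) : Prop :=
  SubsetNRBounded (Set.univ : Set X) N R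

/-- A metric space has uniformly bounded growth rate (is an UBG-space) if it is
`(N,R)`-bounded for some `N ∈ 𝒩` and `R ∈ ℛ`. -/
def IsUBG (X : Type*) [MetricSpace X] : Prop :=
  ∃ N : ℝ → ℕ, ∃ R : ℝ → ℝ, (∀ ρ, 0 ≤ R ρ) ∧ IsNRBounded X N R


/-- A map between metric spaces is quasi-isometric if it is `(Λ,λ)`-quasi-isometric for
some `Λ ≥ 1`, `λ ≥ 0`. -/
def QuasiIsometricMap {X Y : Type*} [MetricSpace X] [MetricSpace Y] (f : X → Y) : Prop :=
  ∃ Λ lam : ℝ, 1 ≤ Λ ∧ 0 ≤ lam ∧ ∀ x x' : X,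
    dist x x' / Λ - lam ≤ dist (f x) (f x') ∧ dist (f x) (f x') ≤ Λ * dist x x' + lam

/-- Corollary 2.4: having uniformly bounded growth rate is a quasi-isometry invariant.
If `f : X → Y` is quasi-isometric and `Y` is UBG, then `X` is UBG; and if moreover the
image of `f` is cobounded in `Y`, then `X` is UBG iff `Y` is UBG. -/
lemma ubg_pullback {X Y : Type*} [MetricSpace X] [MetricSpace Y]
    (f : X → Y) (Λ lam : ℝ) (hΛ : 1 ≤ Λ) (hlam : 0 ≤ lam)
    (hf : ∀ x x' : X, dist x x' / Λ - lam ≤ dist (f x) (f x') ∧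
      dist (f x) (f x') ≤ Λ * dist x x' + lam) :
    IsUBG Y → IsUBG X := by
  rintro ⟨N, R, hR0, hNR⟩
  classical
  have hΛ0 : (0:ℝ) < Λ := lt_of_lt_of_le one_pos hΛ
  refine ⟨fun ρ => N (ρ / (4*Λ^2)),
    fun ρ => max (max (R (ρ / (4*Λ^2))) (2*Λ*lam/ρ)) 1,
    fun ρ => le_trans zero_le_one (le_max_right _ _), ?_⟩
  intro ρ hρ0 hρ1 r hr a _ S hS hpair
  have hρ'0 : 0 < ρ / (4*Λ^2) := by positivity
  have hρ'1 : ρ / (4*Λ^2) < 1 := by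
    rw [div_lt_one (by positivity)]; nlinarith
  have hr1 : (1:ℝ) ≤ r := le_trans (le_max_right _ _) hr
  have hrR : R (ρ / (4*Λ^2)) ≤ r :=
    le_trans (le_trans (le_max_left _ _) (le_max_left _ _)) hr
  have hrlam : 2*Λ*lam/ρ ≤ r :=
    le_trans (le_trans (le_max_right _ _) (le_max_left _ _)) hr
  have key : 2*Λ*lam ≤ r * ρ := (div_le_iff₀ hρ0).mp hrlam
  -- distances within S
  have hSball : ∀ x ∈ S, dist x a ≤ r := by
    intro x hx
    exact mem_closedBall.mp (hS (Finset.mem_coe.mpr hx)).2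
  -- injectivity of f on S
  have hinj : Set.InjOn f (S : Set X) := by
    intro x hx x' hx' hfeq
    by_contra hne
    have hd : ρ * r ≤ dist x x' := hpair hx hx' hne
    have h1 := (hf x x').1
    rw [hfeq, dist_self] at h1
    have h2 : dist x x' ≤ Λ * lam := by
      have : dist x x' / Λ ≤ lam := by linarith
      calc dist x x' = dist x x' / Λ * Λ := by field_simp
        _ ≤ lam * Λ := by nlinarith [dist_nonneg (x := x) (y := x')]
        _ = Λ * lam := by ring
    nlinarith
  have hcard : (S.image f).card = S.card := Finset.card_image_of_injOn hinj
  have happ := hNR (ρ / (4*Λ^2)) hρ'0 hρ'1 (2*Λ*r) (by nlinarith) (f a) trivial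
    (S.image f) ?_ ?_
  · rw [hcard] at happ; exact happ
  · -- image lies in the ball
    intro p hp
    rw [Finset.coe_image] at hp
    obtain ⟨x, hx, rfl⟩ := hp
    refine ⟨trivial, mem_closedBall.mpr ?_⟩
    have h2 := (hf x a).2
    have h3 := hSball x hx
    nlinarith
  · -- pairwise separation of the image
    rw [Finset.coe_image]
    rintro p ⟨x, hx, rfl⟩ q ⟨x', hx', rfl⟩ hpq
    have hne : x ≠ x' := fun h => hpq (by rw [h])
    have hd : ρ * r ≤ dist x x' := hpair hx hx' hne
    have h1 := (hf x x').1
    have heq : ρ/(4*Λ^2) * (2*Λ*r) = ρ*r/(2*Λ) := by field_simp; ring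
    rw [heq, div_le_iff₀ (by positivity)]
    have h4 : dist x x' ≤ (dist (f x) (f x') + lam) * Λ := by
      rw [← div_le_iff₀ hΛ0]; linarith
    nlinarith

theorem isUBG_quasiIsometry_invariant {X Y : Type*} [MetricSpace X] [MetricSpace Y]
    (f : X → Y) (hf : QuasiIsometricMap f) :
    (IsUBG Y → IsUBG X) ∧
    ((∃ lam : ℝ, 0 ≤ lam ∧ ∀ y : Y, ∃ x : X, dist y (f x) ≤ lam) →
      (IsUBG X ↔ IsUBG Y)) := by
  obtain ⟨Λ, lam, hΛ, hlam, hqi⟩ := hf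
  have hΛ0 : (0:ℝ) < Λ := lt_of_lt_of_le one_pos hΛ
  have part1 : IsUBG Y → IsUBG X := ubg_pullback f Λ lam hΛ hlam hqi
  refine ⟨part1, ?_⟩
  rintro ⟨lam₀, hlam₀, hco⟩
  refine ⟨?_, part1⟩
  intro hX
  choose g hg using hco
  refine ubg_pullback g Λ (Λ*(2*lam₀+lam)) hΛ (by positivity) ?_ hX
  intro y y'
  have h1 := (hqi (g y) (g y')).1
  have h2 := (hqi (g y) (g y')).2
  have hty : dist (f (g y)) (f (g y')) ≤ dist y y' + 2*lam₀ := by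
    calc dist (f (g y)) (f (g y')) ≤ dist (f (g y)) y + dist y (f (g y')) := dist_triangle _ _ _
      _ ≤ dist (f (g y)) y + (dist y y' + dist y' (f (g y'))) := by
          linarith [dist_triangle y y' (f (g y'))]
      _ ≤ dist y y' + 2*lam₀ := by
          have := hg y; have := hg y'
          rw [dist_comm (f (g y)) y]; linarith
  have hty2 : dist y y' ≤ dist (f (g y)) (f (g y')) + 2*lam₀ := by
    calc dist y y' ≤ dist y (f (g y)) + dist (f (g y)) y' := dist_triangle _ _ _
      _ ≤ dist y (f (g y)) + (dist (f (g y)) (f (g y')) + dist (f (g y')) y') := by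
          linarith [dist_triangle (f (g y)) (f (g y')) y']
      _ ≤ dist (f (g y)) (f (g y')) + 2*lam₀ := by
          have := hg y; have := hg y'
          rw [dist_comm (f (g y')) y']; linarith
  constructor
  · -- lower bound
    rw [sub_le_iff_le_add, div_le_iff₀ hΛ0]
    nlinarith [sq_nonneg (Λ-1), dist_nonneg (x := g y) (y := g y')]
  · -- upper bound
    have h3 : dist (g y) (g y') ≤ (dist (f (g y)) (f (g y')) + lam) * Λ := by
      rw [← div_le_iff₀ hΛ0]; linarith
    nlinarith [sq_nonneg (Λ-1)]
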